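/- arXiv:1507.03726 — 3 statements merged into one kernel-verified Lean document; each statement's English description precedes it below -/
import Mathlib

section
/- For any group G, the subgroup C(G), defined as the intersection of the normalizers of the centralizers of all elements of G, is a 2-Engel group; that is, for all x in C(G) and all y in C(G), [[x,y],y] = 1. -/
/-- The norm of centralizers: intersection of normalizers of centralizers of all elements. -/
def normCent (G : Type*) [Group G] : Subgroup G :=
  ⨅ a : G, Subgroup.normalizer ((Subgroup.centralizer {a} : Subgroup G) : Set G)

theorem normCent_normal (G : Type*) [Group G] : (normCent G).Normal := by
  constructor
  intro n hn g
  simp only [normCent, Subgroup.mem_iInf] at hn ⊢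
  intro a
  rw [Subgroup.mem_normalizer_iff]
  intro h
  have h1 := Subgroup.mem_normalizer_iff.mp (hn (g⁻¹ * a * g)) (g⁻¹ * h * g)
  simp only [Subgroup.mem_centralizer_singleton_iff] at h1 ⊢
  constructor
  · intro hc
    have e0 : (g⁻¹ * h * g) * (g⁻¹ * a * g) = (g⁻¹ * a * g) * (g⁻¹ * h * g) := by
      calc (g⁻¹ * h * g) * (g⁻¹ * a * g) = g⁻¹ * (h * a) * g := by group
        _ = g⁻¹ * (a * h) * g := by rw [hc]
        _ = (g⁻¹ * a * g) * (g⁻¹ * h * g) := by group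
    have e1 := h1.mp e0
    calc g * n * g⁻¹ * h * (g * n * g⁻¹)⁻¹ * a
        = g * ((n * (g⁻¹ * h * g) * n⁻¹) * (g⁻¹*a*g)) * g⁻¹ := by group
      _ = g * ((g⁻¹*a*g) * (n * (g⁻¹ * h * g) * n⁻¹)) * g⁻¹ := by rw [e1]
      _ = a * (g * n * g⁻¹ * h * (g * n * g⁻¹)⁻¹) := by group
  · intro hc
    have e0 : (n * (g⁻¹ * h * g) * n⁻¹) * (g⁻¹*a*g) = (g⁻¹*a*g) * (n * (g⁻¹ * h * g) * n⁻¹) := by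
      calc (n * (g⁻¹ * h * g) * n⁻¹) * (g⁻¹*a*g)
          = g⁻¹ * ((g * n * g⁻¹ * h * (g * n * g⁻¹)⁻¹) * a) * g := by group
        _ = g⁻¹ * (a * (g * n * g⁻¹ * h * (g * n * g⁻¹)⁻¹)) * g := by rw [hc]
        _ = (g⁻¹*a*g) * (n * (g⁻¹ * h * g) * n⁻¹) := by group
    have e1 := h1.mpr e0
    calc h * a = g * ((g⁻¹*h*g) * (g⁻¹*a*g)) * g⁻¹ := by group
      _ = g * ((g⁻¹*a*g) * (g⁻¹*h*g)) * g⁻¹ := by rw [e1]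
      _ = a * h := by group

open scoped commutatorElement

/-- `C(G)` is a 2-Engel group. -/
theorem stmt0 (G : Type*) [Group G] :
    ∀ x ∈ normCent G, ∀ y ∈ normCent G, ⁅⁅x, y⁆, y⁆ = 1 := by
  intro x hx y _
  simp only [normCent, Subgroup.mem_iInf] at hx
  have h1 := (Subgroup.mem_normalizer_iff.mp (hx y) y).mp
    (Subgroup.mem_centralizer_singleton_iff.mpr rfl)
  have hc : y * (x * y * x⁻¹) = (x * y * x⁻¹) * y :=
    Subgroup.mem_centralizer_iff.mp h1 y rfl
  have hcom : ⁅x, y⁆ * y = y * ⁅x, y⁆ := by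
    have hrw : ⁅x, y⁆ * y = x * y * x⁻¹ := by group
    have hrw2 : y * ⁅x, y⁆ = (y * (x * y * x⁻¹)) * y⁻¹ := by group
    rw [hrw, hrw2, hc]; group
  have h2 : ⁅⁅x, y⁆, y⁆ = (⁅x,y⁆ * y) * (y * ⁅x,y⁆)⁻¹ := by group
  rw [h2, hcom]; group
end

section
/- For any group G, the subgroup C(G) = ⋂_{a∈G} N_G(C_G(a)) is solvable of derived length at most 2 (i.e., metabelian). -/
open scoped commutatorElement

namespace Levi2

variable {K : Type*} [Group K]

/-- abbreviation for the normal closure of a single element -/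
abbrev A (x : K) : Subgroup K := Subgroup.normalClosure ({x} : Set K)

lemma comm_ab_b (hE : ∀ a b : K, ⁅⁅a,b⁆,b⁆ = 1) (a b : K) : Commute ⁅a,b⁆ b :=
  commutatorElement_eq_one_iff_commute.mp (hE a b)

lemma comm_ab_a (hE : ∀ a b : K, ⁅⁅a,b⁆,b⁆ = 1) (a b : K) : Commute ⁅a,b⁆ a := by
  have h := (comm_ab_b hE b a).inv_left
  rwa [commutatorElement_inv] at h

lemma commute_conj {a b : K} (g : K) (h : Commute a b) :
    Commute (g*a*g⁻¹) (g*b*g⁻¹) := by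
  have hh : a * b = b * a := h
  show (g*a*g⁻¹) * (g*b*g⁻¹) = (g*b*g⁻¹) * (g*a*g⁻¹)
  calc (g*a*g⁻¹) * (g*b*g⁻¹) = g*(a*b)*g⁻¹ := by group
    _ = g*(b*a)*g⁻¹ := by rw [hh]
    _ = (g*b*g⁻¹) * (g*a*g⁻¹) := by group

lemma conj_self_comm (hE : ∀ a b : K, ⁅⁅a,b⁆,b⁆ = 1) (x g : K) :
    Commute x (g*x*g⁻¹) := by
  have h1 : Commute x (⁅g,x⁆ * x) := ((comm_ab_b hE g x).symm).mul_right (Commute.refl x)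
  have e : ⁅g,x⁆ * x = g*x*g⁻¹ := by group
  rwa [e] at h1

lemma conj_conj_comm (hE : ∀ a b : K, ⁅⁅a,b⁆,b⁆ = 1) (x g h : K) :
    Commute (g*x*g⁻¹) (h*x*h⁻¹) := by
  have h1 := commute_conj g (conj_self_comm hE x (g⁻¹*h))
  have e2 : g*((g⁻¹*h)*x*(g⁻¹*h)⁻¹)*g⁻¹ = h*x*h⁻¹ := by group
  rwa [e2] at h1

lemma mem_A_self (x : K) : x ∈ A x :=
  Subgroup.subset_normalClosure (Set.mem_singleton x)

lemma mem_A_conj {x u : K} (hu : u ∈ A x) (g : K) : g*u*g⁻¹ ∈ A x :=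
  Subgroup.normalClosure_normal.conj_mem u hu g

lemma mem_A_commL {x u : K} (hu : u ∈ A x) (c : K) : ⁅u,c⁆ ∈ A x := by
  have e : ⁅u,c⁆ = u * (c*u⁻¹*c⁻¹) := by group
  rw [e]; exact mul_mem hu (mem_A_conj (inv_mem hu) c)

lemma mem_A_commR {x u : K} (hu : u ∈ A x) (c : K) : ⁅c,u⁆ ∈ A x := by
  have e : ⁅c,u⁆ = (c*u*c⁻¹) * u⁻¹ := by group
  rw [e]; exact mul_mem (mem_A_conj hu c) (inv_mem hu)

lemma A_comm (hE : ∀ a b : K, ⁅⁅a,b⁆,b⁆ = 1) {x u v : K}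
    (hu : u ∈ A x) (hv : v ∈ A x) : Commute u v := by
  have hu' : u ∈ Subgroup.closure (Group.conjugatesOfSet ({x} : Set K)) := hu
  have hv' : v ∈ Subgroup.closure (Group.conjugatesOfSet ({x} : Set K)) := hv
  refine Subgroup.closure_induction₂ ?_ ?_ ?_ ?_ ?_ ?_ ?_ hu' hv'
  · intro p q hp hq
    rw [Group.mem_conjugatesOfSet_iff] at hp hq
    obtain ⟨a, ha, hca⟩ := hp
    obtain ⟨b, hb, hcb⟩ := hq
    rw [Set.mem_singleton_iff] at ha hb
    rw [ha] at hca
    rw [hb] at hcb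
    obtain ⟨g, rfl⟩ := isConj_iff.mp hca
    obtain ⟨h, rfl⟩ := isConj_iff.mp hcb
    exact conj_conj_comm hE x g h
  · intro p _; exact Commute.one_left p
  · intro p _; exact Commute.one_right p
  · intro p q r _ _ _ h1 h2; exact h1.mul_left h2
  · intro p q r _ _ _ h1 h2; exact h1.mul_right h2
  · intro p q _ _ h1; exact h1.inv_left
  · intro p q _ _ h1; exact h1.inv_right

lemma theta_add (hE : ∀ a b : K, ⁅⁅a,b⁆,b⁆ = 1) {x u v : K}
    (hu : u ∈ A x) (hv : v ∈ A x) (g : K) :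
    ⁅g, u*v⁆ = ⁅g,u⁆ * ⁅g,v⁆ := by
  have hc : Commute u ⁅g,v⁆ := A_comm hE hu (mem_A_commR hv g)
  calc ⁅g,u*v⁆ = ⁅g,u⁆ * (u * ⁅g,v⁆ * u⁻¹) := by group
    _ = ⁅g,u⁆ * (⁅g,v⁆ * u * u⁻¹) := by rw [hc.eq]
    _ = ⁅g,u⁆ * ⁅g,v⁆ := by group

lemma theta_inv (hE : ∀ a b : K, ⁅⁅a,b⁆,b⁆ = 1) {x u : K}
    (hu : u ∈ A x) (g : K) : ⁅g, u⁻¹⁆ = ⁅g,u⁆⁻¹ := by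
  have h := theta_add hE hu (inv_mem hu) g
  rw [show u * u⁻¹ = (1:K) by group, commutatorElement_one_right] at h
  exact (inv_eq_of_mul_eq_one_right h.symm).symm

lemma theta_sq (hE : ∀ a b : K, ⁅⁅a,b⁆,b⁆ = 1) (g u : K) : ⁅g, ⁅g,u⁆⁆ = 1 := by
  apply commutatorElement_eq_one_iff_commute.mpr
  have h := (comm_ab_b hE u g).inv_left.symm
  rwa [commutatorElement_inv] at h

lemma theta_mulg (g h u : K) : ⁅g*h, u⁆ = (g*⁅h,u⁆*g⁻¹) * ⁅g,u⁆ := by group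

lemma sigma_eq (g u : K) : g*u*g⁻¹ = ⁅g,u⁆ * u := by group


lemma three_term (hE : ∀ a b : K, ⁅⁅a,b⁆,b⁆ = 1) {x u : K}
    (hu : u ∈ A x) (g h : K) :
    ⁅h,⁅g,⁅h,u⁆⁆⁆ * ⁅g,⁅h,u⁆⁆ * ⁅h,⁅g,u⁆⁆ = 1 := by
  have hp : ⁅h,u⁆ ∈ A x := mem_A_commR hu h
  have hq : ⁅g,u⁆ ∈ A x := mem_A_commR hu g
  have hP : g*⁅h,u⁆*g⁻¹ ∈ A x := mem_A_conj hp g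
  have hgp : ⁅g,⁅h,u⁆⁆ ∈ A x := mem_A_commR hp g
  have h0 : ⁅g*h, ⁅g*h, u⁆⁆ = 1 := theta_sq hE _ _
  rw [show ⁅g*h, u⁆ = (g*⁅h,u⁆*g⁻¹) * ⁅g,u⁆ from theta_mulg g h u] at h0
  rw [theta_add hE hP hq] at h0
  rw [theta_mulg g h (g*⁅h,u⁆*g⁻¹), theta_mulg g h ⁅g,u⁆] at h0
  have e1 : ⁅g, g*⁅h,u⁆*g⁻¹⁆ = g*⁅g,⁅h,u⁆⁆*g⁻¹ := by group
  have e2 : ⁅h, g*⁅h,u⁆*g⁻¹⁆ = ⁅h,⁅g,⁅h,u⁆⁆⁆ := by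
    rw [sigma_eq g ⁅h,u⁆, theta_add hE hgp hp, theta_sq hE, mul_one]
  rw [e1, e2, theta_sq hE g u, mul_one] at h0
  calc ⁅h,⁅g,⁅h,u⁆⁆⁆ * ⁅g,⁅h,u⁆⁆ * ⁅h,⁅g,u⁆⁆
      = g⁻¹*(((g*⁅h,⁅g,⁅h,u⁆⁆⁆*g⁻¹) * (g*⁅g,⁅h,u⁆⁆*g⁻¹)) * (g*⁅h,⁅g,u⁆⁆*g⁻¹))*g := by
        group
    _ = g⁻¹*1*g := by rw [h0]
    _ = 1 := by group

lemma tri_hgh (hE : ∀ a b : K, ⁅⁅a,b⁆,b⁆ = 1) {x u : K}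
    (hu : u ∈ A x) (g h : K) : ⁅h,⁅g,⁅h,u⁆⁆⁆ = 1 := by
  have l3 := three_term hE hu g h
  have hT1 : ⁅h,⁅g,⁅h,u⁆⁆⁆ ∈ A x := mem_A_commR (mem_A_commR (mem_A_commR hu h) g) h
  have hT2 : ⁅g,⁅h,u⁆⁆ ∈ A x := mem_A_commR (mem_A_commR hu h) g
  have hT3 : ⁅h,⁅g,u⁆⁆ ∈ A x := mem_A_commR (mem_A_commR hu g) h
  have happ : ⁅h, ⁅h,⁅g,⁅h,u⁆⁆⁆ * ⁅g,⁅h,u⁆⁆ * ⁅h,⁅g,u⁆⁆⁆ = 1 := by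
    rw [l3, commutatorElement_one_right]
  rw [theta_add hE (mul_mem hT1 hT2) hT3 h, theta_add hE hT1 hT2 h,
    theta_sq hE h ⁅g,⁅h,u⁆⁆, theta_sq hE h ⁅g,u⁆, one_mul, mul_one] at happ
  exact happ

lemma anticomm (hE : ∀ a b : K, ⁅⁅a,b⁆,b⁆ = 1) {x u : K}
    (hu : u ∈ A x) (g h : K) : ⁅g,⁅h,u⁆⁆ * ⁅h,⁅g,u⁆⁆ = 1 := by
  have l3 := three_term hE hu g h
  rwa [tri_hgh hE hu g h, one_mul] at l3

lemma c_eq (hE : ∀ a b : K, ⁅⁅a,b⁆,b⁆ = 1) (x y z : K) :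
    ⁅z,⁅y,x⁆⁆ = ⁅⁅x,y⁆,z⁆ := by
  have h1 : ⁅z, ⁅x,y⁆⁻¹⁆ = ⁅z,⁅x,y⁆⁆⁻¹ := theta_inv hE (mem_A_commL (mem_A_self x) y) z
  calc ⁅z,⁅y,x⁆⁆ = ⁅z, ⁅x,y⁆⁻¹⁆ := by rw [commutatorElement_inv]
    _ = ⁅z,⁅x,y⁆⁆⁻¹ := h1
    _ = ⁅⁅x,y⁆,z⁆ := commutatorElement_inv _ _

lemma T_sq (hE : ∀ a b : K, ⁅⁅a,b⁆,b⁆ = 1) (x y z w : K) :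
    ⁅w,⁅z,⁅y,x⁆⁆⁆ * ⁅w,⁅z,⁅y,x⁆⁆⁆ = 1 := by
  have hx : x ∈ A x := mem_A_self x
  have hyx : ⁅y,x⁆ ∈ A x := mem_A_commR hx y
  have hzx : ⁅z,x⁆ ∈ A x := mem_A_commR hx z
  have hwx : ⁅w,x⁆ ∈ A x := mem_A_commR hx w
  have hc : ⁅z,⁅y,x⁆⁆ ∈ A x := mem_A_commR hyx z
  have hT : ⁅w,⁅z,⁅y,x⁆⁆⁆ ∈ A x := mem_A_commR hc w
  have hD1 : ⁅w,⁅z,x⁆⁆ ∈ A x := mem_A_commR hzx w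
  have h0 : ⁅w*z, ⁅y,x⁆⁆ * ⁅y, ⁅w*z, x⁆⁆ = 1 := anticomm hE hx (w*z) y
  have e1 : ⁅w*z, ⁅y,x⁆⁆ = (⁅w,⁅z,⁅y,x⁆⁆⁆ * ⁅z,⁅y,x⁆⁆) * ⁅w,⁅y,x⁆⁆ := by
    rw [theta_mulg w z ⁅y,x⁆, sigma_eq w ⁅z,⁅y,x⁆⁆]
  have e2 : ⁅w*z, x⁆ = ⁅w,⁅z,x⁆⁆ * ⁅z,x⁆ * ⁅w,x⁆ := by
    rw [theta_mulg w z x, sigma_eq w ⁅z,x⁆]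
  have e3 : ⁅y, ⁅w*z, x⁆⁆ = ⁅y,⁅w,⁅z,x⁆⁆⁆ * ⁅y,⁅z,x⁆⁆ * ⁅y,⁅w,x⁆⁆ := by
    rw [e2, theta_add hE (mul_mem hD1 hzx) hwx y, theta_add hE hD1 hzx y]
  have i1 : ⁅w,⁅y,x⁆⁆ * ⁅y,⁅w,x⁆⁆ = 1 := anticomm hE hx w y
  have i2 : ⁅y,⁅z,x⁆⁆ = ⁅z,⁅y,x⁆⁆⁻¹ := by
    have h5 := anticomm hE hx z y
    exact (inv_eq_of_mul_eq_one_right h5).symm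
  have i3 : ⁅y,⁅w,⁅z,x⁆⁆⁆ = ⁅w,⁅z,⁅y,x⁆⁆⁆ := by
    have h4 := anticomm hE hzx w y
    rw [i2, theta_inv hE hc w] at h4
    have h5 := inv_mul_eq_one.mp h4
    exact h5.symm
  rw [e1, e3, i2, i3] at h0
  set T := ⁅w,⁅z,⁅y,x⁆⁆⁆ with hTdef
  set c := ⁅z,⁅y,x⁆⁆ with hcdef
  set E1 := ⁅w,⁅y,x⁆⁆ with hE1def
  set E2 := ⁅y,⁅w,x⁆⁆ with hE2def
  have cTc : Commute T c := A_comm hE hT hc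
  have cTE1 : Commute T E1 := A_comm hE hT (mem_A_commR hyx w)
  have ccE1 : Commute c E1 := A_comm hE hc (mem_A_commR hyx w)
  have key : ((T*c)*E1)*((T*c⁻¹)*E2) = (T*T)*(E1*E2) := by
    have hcm : (c*E1)*T = T*(c*E1) := ((cTc.symm).mul_left (cTE1.symm)).eq
    calc ((T*c)*E1)*((T*c⁻¹)*E2)
        = T*(((c*E1)*T)*(c⁻¹*E2)) := by group
      _ = T*((T*(c*E1))*(c⁻¹*E2)) := by rw [hcm]
      _ = (T*T)*(((c*E1)*c⁻¹)*E2) := by group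
      _ = (T*T)*(((E1*c)*c⁻¹)*E2) := by rw [ccE1.eq]
      _ = (T*T)*(E1*E2) := by group
  have h6 : (T*T)*(E1*E2) = 1 := by
    rw [← key]
    calc ((T*c)*E1)*((T*c⁻¹)*E2) = ((T*c)*E1)*((T*c⁻¹)*E2) := rfl
      _ = 1 := h0
  rw [i1, mul_one] at h6
  exact h6


lemma s_inv_right (hE : ∀ a b : K, ⁅⁅a,b⁆,b⁆ = 1) (p q : K) : ⁅p,q⁻¹⁆ = ⁅p,q⁆⁻¹ := by
  have hc : Commute ⁅p,q⁆⁻¹ q := (comm_ab_b hE p q).inv_left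
  calc ⁅p,q⁻¹⁆ = q⁻¹*(⁅p,q⁆⁻¹*q) := by group
    _ = q⁻¹*(q*⁅p,q⁆⁻¹) := by rw [hc.eq]
    _ = ⁅p,q⁆⁻¹ := by group

lemma s_inv_left (hE : ∀ a b : K, ⁅⁅a,b⁆,b⁆ = 1) (p q : K) : ⁅p⁻¹,q⁆ = ⁅p,q⁆⁻¹ := by
  have hc : Commute ⁅p,q⁆⁻¹ p := (comm_ab_a hE p q).inv_left
  calc ⁅p⁻¹,q⁆ = p⁻¹*(⁅p,q⁆⁻¹*p) := by group
    _ = p⁻¹*(p*⁅p,q⁆⁻¹) := by rw [hc.eq]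
    _ = ⁅p,q⁆⁻¹ := by group

lemma conj_eq_of_mem (hE : ∀ a b : K, ⁅⁅a,b⁆,b⁆ = 1) {t u : K}
    (hu : u ∈ A t) : t*u*t⁻¹ = u := by
  have hc := A_comm hE (mem_A_self t) hu
  rw [hc.eq, mul_inv_cancel_right]

lemma cube (hE : ∀ a b : K, ⁅⁅a,b⁆,b⁆ = 1) (x y z : K) :
    ⁅⁅x,y⁆,z⁆ * ⁅⁅x,y⁆,z⁆ * ⁅⁅x,y⁆,z⁆ = 1 := by
  have hw : (x * ⁅y,⁅x⁻¹,z⁆⁆ * x⁻¹) * (z * ⁅x,⁅z⁻¹,y⁆⁆ * z⁻¹) *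
      (y * ⁅z,⁅y⁻¹,x⁆⁆ * y⁻¹) = 1 := by group
  have t1 : x * ⁅y,⁅x⁻¹,z⁆⁆ * x⁻¹ = ⁅⁅z,x⁆,y⁆⁻¹ := by
    rw [s_inv_left hE x z, s_inv_right hE y ⁅x,z⁆, c_eq hE z x y]
    exact conj_eq_of_mem hE (inv_mem (mem_A_commL (mem_A_commR (mem_A_self x) z) y))
  have t2 : z * ⁅x,⁅z⁻¹,y⁆⁆ * z⁻¹ = ⁅⁅y,z⁆,x⁆⁻¹ := by
    rw [s_inv_left hE z y, s_inv_right hE x ⁅z,y⁆, c_eq hE y z x]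
    exact conj_eq_of_mem hE (inv_mem (mem_A_commL (mem_A_commR (mem_A_self z) y) x))
  have t3 : y * ⁅z,⁅y⁻¹,x⁆⁆ * y⁻¹ = ⁅⁅x,y⁆,z⁆⁻¹ := by
    rw [s_inv_left hE y x, s_inv_right hE z ⁅y,x⁆, c_eq hE x y z]
    exact conj_eq_of_mem hE (inv_mem (mem_A_commL (mem_A_commR (mem_A_self y) x) z))
  rw [t1, t2, t3] at hw
  have tr23 : ∀ p q r : K, ⁅⁅p,q⁆,r⁆ * ⁅⁅p,r⁆,q⁆ = 1 := by
    intro p q r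
    have h5 := anticomm hE (mem_A_self p) r q
    rwa [c_eq hE p q r, c_eq hE p r q] at h5
  have tr12 : ∀ p q r : K, ⁅⁅q,p⁆,r⁆ = ⁅⁅p,q⁆,r⁆⁻¹ := by
    intro p q r
    rw [← commutatorElement_inv p q, s_inv_left hE ⁅p,q⁆ r]
  have cyc1 : ⁅⁅z,x⁆,y⁆ = ⁅⁅x,y⁆,z⁆ := by
    rw [tr12 x z y]
    have h5 := tr23 x y z
    have h6 : ⁅⁅x,z⁆,y⁆ = ⁅⁅x,y⁆,z⁆⁻¹ := (inv_eq_of_mul_eq_one_right h5).symm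
    rw [h6, inv_inv]
  have cyc2 : ⁅⁅y,z⁆,x⁆ = ⁅⁅x,y⁆,z⁆ := by
    have h5 := tr23 y z x
    have h6 : ⁅⁅y,z⁆,x⁆ = ⁅⁅y,x⁆,z⁆⁻¹ := eq_inv_of_mul_eq_one_left h5
    rw [h6, tr12 x y z, inv_inv]
  rw [cyc1, cyc2] at hw
  have h7 : (⁅⁅x,y⁆,z⁆ * ⁅⁅x,y⁆,z⁆ * ⁅⁅x,y⁆,z⁆)⁻¹
      = ⁅⁅x,y⁆,z⁆⁻¹ * ⁅⁅x,y⁆,z⁆⁻¹ * ⁅⁅x,y⁆,z⁆⁻¹ := by group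
  exact inv_eq_one.mp (h7.trans hw)

lemma gamma3_central (hE : ∀ a b : K, ⁅⁅a,b⁆,b⁆ = 1) (x y z w : K) :
    ⁅w, ⁅⁅x,y⁆,z⁆⁆ = 1 := by
  have hc' : ⁅⁅x,y⁆,z⁆ ∈ A x := mem_A_commL (mem_A_commL (mem_A_self x) y) z
  have h2 : ⁅w,⁅⁅x,y⁆,z⁆⁆ * ⁅w,⁅⁅x,y⁆,z⁆⁆ = 1 := by
    have h := T_sq hE x y z w
    rwa [c_eq hE x y z] at h
  have h3 : ⁅w, ⁅⁅x,y⁆,z⁆ * ⁅⁅x,y⁆,z⁆ * ⁅⁅x,y⁆,z⁆⁆ = 1 := by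
    rw [cube hE x y z]; exact commutatorElement_one_right w
  rw [theta_add hE (mul_mem hc' hc') hc' w, theta_add hE hc' hc' w] at h3
  rw [h2, one_mul] at h3
  exact h3

lemma comm_comm (hE : ∀ a b : K, ⁅⁅a,b⁆,b⁆ = 1) (x y z w : K) :
    Commute ⁅x,y⁆ ⁅z,w⁆ := by
  have hcent : ∀ s t : K, Commute ⁅⁅x,y⁆,s⁆ t := fun s t =>
    (commutatorElement_eq_one_iff_commute.mp (gamma3_central hE x y s t)).symm
  have hom : ∀ t s : K, ⁅⁅x,y⁆, t*s⁆ = ⁅⁅x,y⁆,t⁆ * ⁅⁅x,y⁆,s⁆ := by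
    intro t s
    have hc : Commute t ⁅⁅x,y⁆,s⁆ := (hcent s t).symm
    calc ⁅⁅x,y⁆,t*s⁆ = ⁅⁅x,y⁆,t⁆ * (t * ⁅⁅x,y⁆,s⁆ * t⁻¹) := by group
      _ = ⁅⁅x,y⁆,t⁆ * (⁅⁅x,y⁆,s⁆ * t * t⁻¹) := by rw [hc.eq]
      _ = ⁅⁅x,y⁆,t⁆ * ⁅⁅x,y⁆,s⁆ := by group
  have hinv : ∀ t : K, ⁅⁅x,y⁆, t⁻¹⁆ = ⁅⁅x,y⁆,t⁆⁻¹ := by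
    intro t
    have h := hom t t⁻¹
    rw [show t * t⁻¹ = (1:K) by group, commutatorElement_one_right] at h
    exact (inv_eq_of_mul_eq_one_right h.symm).symm
  apply commutatorElement_eq_one_iff_commute.mp
  rw [commutatorElement_def z w]
  rw [hom (z*w*z⁻¹) w⁻¹, hom (z*w) z⁻¹, hom z w, hinv z, hinv w]
  have hcom : Commute ⁅⁅x,y⁆,w⁆ ⁅⁅x,y⁆,z⁆⁻¹ := hcent w _
  calc ⁅⁅x,y⁆,z⁆ * ⁅⁅x,y⁆,w⁆ * ⁅⁅x,y⁆,z⁆⁻¹ * ⁅⁅x,y⁆,w⁆⁻¹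
      = ⁅⁅x,y⁆,z⁆ * (⁅⁅x,y⁆,w⁆ * ⁅⁅x,y⁆,z⁆⁻¹) * ⁅⁅x,y⁆,w⁆⁻¹ := by group
    _ = ⁅⁅x,y⁆,z⁆ * (⁅⁅x,y⁆,z⁆⁻¹ * ⁅⁅x,y⁆,w⁆) * ⁅⁅x,y⁆,w⁆⁻¹ := by rw [hcom.eq]
    _ = 1 := by group

lemma derived_two (hE : ∀ a b : K, ⁅⁅a,b⁆,b⁆ = 1) : derivedSeries K 2 = ⊥ := by
  have key : ∀ a ∈ derivedSeries K 1, ∀ b ∈ derivedSeries K 1, ⁅a,b⁆ = 1 := by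
    intro a ha b hb
    apply commutatorElement_eq_one_iff_commute.mpr
    rw [derivedSeries_one, commutator_eq_closure] at ha hb
    refine Subgroup.closure_induction₂ ?_ ?_ ?_ ?_ ?_ ?_ ?_ ha hb
    · rintro p q ⟨x, y, rfl⟩ ⟨z, w, rfl⟩
      exact comm_comm hE x y z w
    · intro p _; exact Commute.one_left p
    · intro p _; exact Commute.one_right p
    · intro p q r _ _ _ h1 h2; exact h1.mul_left h2
    · intro p q r _ _ _ h1 h2; exact h1.mul_right h2
    · intro p q _ _ h1; exact h1.inv_left
    · intro p q _ _ h1; exact h1.inv_right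
  have hle : derivedSeries K 2 ≤ ⊥ := by
    rw [show derivedSeries K 2 = ⁅derivedSeries K 1, derivedSeries K 1⁆
      from derivedSeries_succ K 1]
    refine Subgroup.commutator_le.mpr ?_
    intro g1 h1 g2 h2
    rw [Subgroup.mem_bot]
    exact key g1 h1 g2 h2
  exact le_bot_iff.mp hle

end Levi2

/-- `C(G)` is solvable of derived length at most 2 (metabelian). -/
theorem stmt3 (G : Type*) [Group G] :
    derivedSeries (↥(normCent G)) 2 = ⊥ := by
  apply Levi2.derived_two
  intro a b
  have ha : (a : G) ∈ normCent G := a.2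
  simp only [normCent, Subgroup.mem_iInf] at ha
  have ha' : (a:G) ∈ Subgroup.normalizer ((Subgroup.centralizer {(b:G)} : Subgroup G) : Set G) := ha (b:G)
  have hbb : (b:G) ∈ Subgroup.centralizer {(b:G)} :=
    Subgroup.mem_centralizer_singleton_iff.mpr rfl
  have hconj : (a:G)*(b:G)*(a:G)⁻¹ ∈ Subgroup.centralizer {(b:G)} :=
    (Subgroup.mem_normalizer_iff.mp ha' (b:G)).mp hbb
  have hcomm : ((a:G)*(b:G)*(a:G)⁻¹) * (b:G) = (b:G) * ((a:G)*(b:G)*(a:G)⁻¹) :=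
    Subgroup.mem_centralizer_singleton_iff.mp hconj
  have hcg : ⁅⁅(a:G),(b:G)⁆,(b:G)⁆ = 1 := by
    apply commutatorElement_eq_one_iff_commute.mpr
    have h1 : Commute ((a:G)*(b:G)*(a:G)⁻¹) (b:G) := hcomm
    have h2 : Commute ((b:G))⁻¹ (b:G) := (Commute.refl _).inv_left
    have e : ⁅(a:G),(b:G)⁆ = ((a:G)*(b:G)*(a:G)⁻¹)*(b:G)⁻¹ := by group
    rw [e]; exact h1.mul_left h2
  apply Subtype.ext
  simp only [commutatorElement_def] at hcg ⊢
  push_cast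
  exact hcg
end

section
/- For any dihedral group G = D_n and any i ≥ 0, C_i(G) = Z_{2i}(G), where C_i is the iterated norm-of-centralizers series and Z_j the upper central series. -/
/-- The ascending series of norms of centralizers, bundled with normality. -/
def CSeriesAux (G : Type*) [Group G] : ℕ → {H : Subgroup G // H.Normal}
  | 0 => ⟨⊥, inferInstance⟩
  | (i+1) =>
    let p := CSeriesAux G i
    haveI := p.2
    ⟨(normCent (G ⧸ p.1)).comap (QuotientGroup.mk' p.1),
      Subgroup.Normal.comap (normCent_normal _) _⟩

/-- `CSeries G i` = `C_i(G)`: `C_0 = 1` and `C_{i+1}(G)/C_i(G) = C(G/C_i(G))`. -/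
def CSeries (G : Type*) [Group G] (n : ℕ) : Subgroup G := (CSeriesAux G n).1

instance CSeries_normal (G : Type*) [Group G] (n : ℕ) : (CSeries G n).Normal :=
  (CSeriesAux G n).2


section DihedralAux

open DihedralGroup

lemma mem_pull {G : Type*} [Group G] (H : Subgroup G) [H.Normal] (g : G) :
    g ∈ (normCent (G ⧸ H)).comap (QuotientGroup.mk' H) ↔
      ∀ a h : G, ((h * a)⁻¹ * (a * h) ∈ H ↔
        ((g * h * g⁻¹) * a)⁻¹ * (a * (g * h * g⁻¹)) ∈ H) := by
  rw [Subgroup.mem_comap]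
  simp only [normCent, Subgroup.mem_iInf]
  have key : ∀ (u v : G), ((QuotientGroup.mk u : G ⧸ H) * QuotientGroup.mk v
      = QuotientGroup.mk v * QuotientGroup.mk u : Prop) ↔ (u * v)⁻¹ * (v * u) ∈ H := by
    intro u v
    rw [← QuotientGroup.mk_mul, ← QuotientGroup.mk_mul, QuotientGroup.eq]
  constructor
  · intro hg a h
    have h1 := Subgroup.mem_normalizer_iff.mp (hg (QuotientGroup.mk a)) (QuotientGroup.mk h)
    simp only [Subgroup.mem_centralizer_singleton_iff, QuotientGroup.mk'_apply] at h1
    rw [key] at h1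
    have h2 : (QuotientGroup.mk g : G ⧸ H) * QuotientGroup.mk h
        * (QuotientGroup.mk g)⁻¹ = QuotientGroup.mk (g * h * g⁻¹) := by
      simp [QuotientGroup.mk_mul]
    rw [h2, key] at h1
    exact h1
  · intro hP ab
    obtain ⟨a, rfl⟩ := QuotientGroup.mk_surjective ab
    rw [Subgroup.mem_normalizer_iff]
    intro hb
    obtain ⟨h, rfl⟩ := QuotientGroup.mk_surjective hb
    simp only [Subgroup.mem_centralizer_singleton_iff, QuotientGroup.mk'_apply]
    rw [key]
    have h2 : (QuotientGroup.mk g : G ⧸ H) * QuotientGroup.mk h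
        * (QuotientGroup.mk g)⁻¹ = QuotientGroup.mk (g * h * g⁻¹) := by
      simp [QuotientGroup.mk_mul]
    rw [h2, key]
    exact hP a h

/-- Membership predicate for `Kgp`. -/
def KP (n m : ℕ) : DihedralGroup n → Prop
  | .r x => (m : ZMod n) * x = 0
  | .sr _ => (m : ZMod n) = 0

@[simp] lemma KP_r {n m : ℕ} (x : ZMod n) : KP n m (r x) ↔ (m : ZMod n) * x = 0 := Iff.rfl
@[simp] lemma KP_sr {n m : ℕ} (y : ZMod n) : KP n m (sr y) ↔ (m : ZMod n) = 0 := Iff.rfl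

/-- The subgroup of `DihedralGroup n` consisting of rotations `r x` with `m • x = 0`,
together with all reflections in case `(m : ZMod n) = 0`. -/
def Kgp (n m : ℕ) : Subgroup (DihedralGroup n) where
  carrier := setOf (KP n m)
  one_mem' := by show KP n m (.r 0); rw [KP_r]; simp
  mul_mem' := by
    rintro (x | x) (y | y) hx hy <;>
      simp only [Set.mem_setOf_eq, setOf, Set.mem_ofPred_eq, r_mul_r, r_mul_sr, sr_mul_r, sr_mul_sr, KP_r, KP_sr] at * <;>
      first
        | (rw [mul_add]; simp [hx, hy])
        | simp [hx, hy]
  inv_mem' := by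
    rintro (x | x) hx <;>
      simp only [Set.mem_setOf_eq, setOf, Set.mem_ofPred_eq, KP_r, KP_sr] at * <;>
      first
        | simpa using hx
        | (show (_ : ZMod _) * (-_) = 0; simp [hx])

lemma mem_Kgp_r {n m : ℕ} (x : ZMod n) : r x ∈ Kgp n m ↔ (m : ZMod n) * x = 0 := Iff.rfl
lemma mem_Kgp_sr {n m : ℕ} (y : ZMod n) : sr y ∈ Kgp n m ↔ (m : ZMod n) = 0 := Iff.rfl

instance Kgp_normal (n m : ℕ) : (Kgp n m).Normal := by
  have r_inv : ∀ x : ZMod n, (r x)⁻¹ = r (-x) := fun _ => rfl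
  have sr_inv : ∀ y : ZMod n, (sr y)⁻¹ = sr y := fun _ => rfl
  constructor
  rintro (x | x) hx (g | g) <;>
    simp only [mem_Kgp_r, mem_Kgp_sr, r_mul_r, r_mul_sr, sr_mul_r, sr_mul_sr,
      r_inv, sr_inv] at * <;>
    simpa using hx

lemma Kgp_hTr (n c M : ℕ) (x : ZMod n) :
    r x ∈ Kgp n (c * M) ↔ (AddMonoidHom.mulLeft ((M : ℕ) : ZMod n)) ((c : ZMod n) * x) = 0 := by
  rw [mem_Kgp_r]
  show _ ↔ ((M : ℕ) : ZMod n) * ((c : ZMod n) * x) = 0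
  rw [show ((c * M : ℕ) : ZMod n) * x = ((M : ℕ) : ZMod n) * ((c : ZMod n) * x) from by
    push_cast; ring]

lemma Kgp_hTs (n c M : ℕ) (y : ZMod n) :
    sr y ∈ Kgp n (c * M) ↔
      ∀ z : ZMod n, (AddMonoidHom.mulLeft ((M : ℕ) : ZMod n)) ((c : ZMod n) * z) = 0 := by
  rw [mem_Kgp_sr]
  show _ ↔ ∀ z : ZMod n, ((M : ℕ) : ZMod n) * ((c : ZMod n) * z) = 0
  constructor
  · intro h z
    rw [show ((M : ℕ) : ZMod n) * ((c : ZMod n) * z) = ((c * M : ℕ) : ZMod n) * z from by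
      push_cast; ring, h, zero_mul]
  · intro h
    have := h 1
    rwa [show ((M : ℕ) : ZMod n) * ((c : ZMod n) * 1) = ((c * M : ℕ) : ZMod n) from by
      push_cast; ring] at this

lemma Zcore (n : ℕ) (H T : Subgroup (DihedralGroup n)) (f : ZMod n →+ ZMod n) (j : ℕ)
    (hZ : upperCentralSeries (DihedralGroup n) j = H)
    (hr : ∀ u : ZMod n, r u ∈ H ↔ f u = 0)
    (hTr : ∀ x : ZMod n, r x ∈ T ↔ f (2 * x) = 0)
    (hTs : ∀ y : ZMod n, sr y ∈ T ↔ ∀ z : ZMod n, f (2 * z) = 0) :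
    upperCentralSeries (DihedralGroup n) (j + 1) = T := by
  have r_inv : ∀ x : ZMod n, (r x)⁻¹ = r (-x) := fun _ => rfl
  have sr_inv : ∀ y : ZMod n, (sr y)⁻¹ = sr y := fun _ => rfl
  ext g
  show (∀ y : DihedralGroup n, g * y * g⁻¹ * y⁻¹ ∈ upperCentralSeries (DihedralGroup n) j) ↔ _
  simp only [hZ]
  rcases g with x | y
  · rw [hTr]
    constructor
    · intro hP
      have h1 := hP (sr 0)
      simp only [r_mul_sr, sr_mul_r, sr_mul_sr, r_mul_r, r_inv, sr_inv, hr] at h1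
      rwa [show (0 - (0 - x + -x) : ZMod n) = 2 * x from by ring] at h1
    · intro h0
      rintro (b | b) <;>
        simp only [r_mul_sr, sr_mul_r, sr_mul_sr, r_mul_r, r_inv, sr_inv, hr]
      · rw [show (x + b + -x + -b : ZMod n) = 0 from by ring, map_zero]
      · rw [show (b - (b - x + -x) : ZMod n) = 2 * x from by ring]; exact h0
  · rw [hTs]
    constructor
    · intro hP z
      have h1 := hP (r (-z))
      simp only [r_mul_sr, sr_mul_r, sr_mul_sr, r_mul_r, r_inv, sr_inv, hr] at h1
      rwa [show (y - (y + -z) + - -z : ZMod n) = 2 * z from by ring] at h1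
    · intro h0
      rintro (b | b) <;>
        simp only [r_mul_sr, sr_mul_r, sr_mul_sr, r_mul_r, r_inv, sr_inv, hr]
      · rw [show (y - (y + b) + -b : ZMod n) = 2 * -b from by ring]; exact h0 _
      · rw [show (b - (y - (b - y)) : ZMod n) = 2 * (b - y) from by ring]; exact h0 _

lemma Ccore (n : ℕ) (H T : Subgroup (DihedralGroup n)) [H.Normal] (f : ZMod n →+ ZMod n)
    (hr : ∀ u : ZMod n, r u ∈ H ↔ f u = 0)
    (hTr : ∀ x : ZMod n, r x ∈ T ↔ f (4 * x) = 0)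
    (hTs : ∀ y : ZMod n, sr y ∈ T ↔ ∀ z : ZMod n, f (4 * z) = 0) :
    (normCent (DihedralGroup n ⧸ H)).comap (QuotientGroup.mk' H) = T := by
  have r_inv : ∀ x : ZMod n, (r x)⁻¹ = r (-x) := fun _ => rfl
  have sr_inv : ∀ y : ZMod n, (sr y)⁻¹ = sr y := fun _ => rfl
  ext g
  rw [mem_pull]
  rcases g with x | y
  · rw [hTr]
    have h4 : f (4 * -x) = 0 ↔ f (4 * x) = 0 := by
      rw [show (4 * -x : ZMod n) = -(4 * x) from by ring, map_neg, neg_eq_zero]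
    constructor
    · intro hP
      have h1 := (hP (sr 0) (sr 0)).mp (by rw [inv_mul_cancel]; exact H.one_mem)
      simp only [r_mul_sr, sr_mul_r, sr_mul_sr, r_mul_r, r_inv, sr_inv, hr] at h1
      rwa [show (-(0 - (0 - x + -x)) + (0 - x + -x - 0) : ZMod n) = -(4 * x) from by ring,
        map_neg, neg_eq_zero] at h1
    · intro h0
      rintro (b | b) (c | c) <;>
        simp only [r_mul_sr, sr_mul_r, sr_mul_sr, r_mul_r, r_inv, sr_inv, hr]
      · rw [show (-(c + b) + (b + c) : ZMod n) = 0 from by ring,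
          show (-(x + c + -x + b) + (b + (x + c + -x)) : ZMod n) = 0 from by ring]
      · rw [show (c - x + -x - b - (c - x + -x + b) : ZMod n) = c - b - (c + b) from by ring]
      · rw [show (b + (x + c + -x) - (b - (x + c + -x)) : ZMod n) = b + c - (b - c) from by ring]
      · have he : f (-(b - (c - x + -x)) + (c - x + -x - b)) = f (-(b - c) + (c - b)) := by
          rw [show (-(b - (c - x + -x)) + (c - x + -x - b) : ZMod n)
            = (-(b - c) + (c - b)) + 4 * -x from by ring, map_add, h4.mpr h0, add_zero]
        rw [he]
  · rw [hTs]
    constructor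
    · intro hP z
      have h1 := (hP (sr (y - z)) (sr (y - z))).mp (by rw [inv_mul_cancel]; exact H.one_mem)
      simp only [r_mul_sr, sr_mul_r, sr_mul_sr, r_mul_r, r_inv, sr_inv, hr] at h1
      rwa [show (-(y - z - (y - (y - z - y))) + (y - (y - z - y) - (y - z)) : ZMod n)
        = 4 * z from by ring] at h1
    · intro h0
      rintro (b | b) (c | c) <;>
        simp only [r_mul_sr, sr_mul_r, sr_mul_sr, r_mul_r, r_inv, sr_inv, hr]
      · rw [show (-(c + b) + (b + c) : ZMod n) = 0 from by ring,
          show (-(y - (y + c) + b) + (b + (y - (y + c))) : ZMod n) = 0 from by ring]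
      · rw [show (y - (c - y) - b - (y - (c - y) + b) : ZMod n) = c - b - (c + b) from by ring]
      · rw [show (b + (y - (y + c)) - (b - (y - (y + c))) : ZMod n)
            = -(b + c - (b - c)) from by ring, map_neg, neg_eq_zero]
      · have he : f (-(b - (y - (c - y))) + (y - (c - y) - b) : ZMod n)
            = f (-(b - c) + (c - b)) := by
          rw [show (-(b - (y - (c - y))) + (y - (c - y) - b) : ZMod n)
            = (-(b - c) + (c - b)) + 4 * (y - c) from by ring, map_add, h0 (y - c), add_zero]
        rw [he]

lemma Z_eq (n j : ℕ) :
    upperCentralSeries (DihedralGroup n) (j + 1) = Kgp n (2 ^ (j + 1)) := by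
  induction j with
  | zero =>
    rw [show (2 : ℕ) ^ (0 + 1) = 2 * 1 from by norm_num]
    refine Zcore n ⊥ _ (AddMonoidHom.mulLeft ((1 : ℕ) : ZMod n)) 0 rfl ?_ ?_ ?_
    · intro u
      show _ ↔ ((1 : ℕ) : ZMod n) * u = 0
      simp [Subgroup.mem_bot, DihedralGroup.one_def, -r_zero]
    · intro x
      rw [Kgp_hTr]
      norm_num
    · intro y
      rw [Kgp_hTs]
      norm_num
  | succ j ih =>
    rw [show (2 : ℕ) ^ (j + 1 + 1) = 2 * 2 ^ (j + 1) from by ring]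
    refine Zcore n _ _ (AddMonoidHom.mulLeft ((2 ^ (j + 1) : ℕ) : ZMod n)) (j + 1) ih ?_ ?_ ?_
    · intro u
      rw [mem_Kgp_r]
      exact Iff.rfl
    · intro x
      rw [Kgp_hTr]
      norm_num
    · intro y
      rw [Kgp_hTs]
      norm_num

lemma C_eq (n i : ℕ) :
    CSeries (DihedralGroup n) (i + 1) = Kgp n (4 ^ (i + 1)) := by
  induction i with
  | zero =>
    have hdef : CSeries (DihedralGroup n) 1
        = (normCent (DihedralGroup n ⧸ (⊥ : Subgroup (DihedralGroup n)))).comap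
            (QuotientGroup.mk' (⊥ : Subgroup (DihedralGroup n))) := rfl
    rw [hdef, show (4 : ℕ) ^ (0 + 1) = 4 * 1 from by norm_num]
    refine Ccore n ⊥ _ (AddMonoidHom.mulLeft ((1 : ℕ) : ZMod n)) ?_ ?_ ?_
    · intro u
      show _ ↔ ((1 : ℕ) : ZMod n) * u = 0
      simp [Subgroup.mem_bot, DihedralGroup.one_def, -r_zero]
    · intro x
      rw [Kgp_hTr]
      norm_num
    · intro y
      rw [Kgp_hTs]
      norm_num
  | succ i ih =>
    have hdef : CSeries (DihedralGroup n) (i + 1 + 1)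
        = (normCent (DihedralGroup n ⧸ CSeries (DihedralGroup n) (i + 1))).comap
            (QuotientGroup.mk' (CSeries (DihedralGroup n) (i + 1))) := rfl
    rw [hdef, show (4 : ℕ) ^ (i + 1 + 1) = 4 * 4 ^ (i + 1) from by ring]
    refine Ccore n _ _ (AddMonoidHom.mulLeft ((4 ^ (i + 1) : ℕ) : ZMod n)) ?_ ?_ ?_
    · intro u
      rw [ih, mem_Kgp_r]
      exact Iff.rfl
    · intro x
      rw [Kgp_hTr]
      norm_num
    · intro y
      rw [Kgp_hTs]
      norm_num

end DihedralAux

/-- For any dihedral group, `C_i(G) = Z_{2i}(G)` for all `i ≥ 0`. -/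
theorem stmt19 (n : ℕ) (i : ℕ) :
    CSeries (DihedralGroup n) i = upperCentralSeries (DihedralGroup n) (2 * i) := by
  cases i with
  | zero => rfl
  | succ i =>
    rw [C_eq n i, show 2 * (i + 1) = (2 * i + 1) + 1 from by ring, Z_eq n (2 * i + 1)]
    congr 1
    rw [show 2 * i + 1 + 1 = 2 * (i + 1) from by ring, pow_mul]
    norm_num
end
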